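/- arXiv:1810.08733 — 8 statements merged into one kernel-verified Lean document; each statement's English description precedes it below -/
import Mathlib

section
/- Let Γ ⊆ X be non-recurrent, let λ ∈ ℂ and g : Γ → ℂ. Then there exists a unique function φ : X_T → ℂ such that φ(S(s, x₀)) = e^{λ s} g(x₀) for all x₀ ∈ Γ and s ∈ [0,T] (the eigenfunction generated by (λ,g)). This φ agrees with g on Γ, and it satisfies the Koopman eigenfunction relation: for all x₀ ∈ Γ and all s ≥ 0, t ≥ 0 with s + t ≤ T, φ(S(t, S(s, x₀))) = e^{λ t} · φ(S(s, x₀)). -/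
/-- A set `Γ` is non-recurrent (for the flow `S` on the time horizon `T`) if
no point of `Γ` returns to `Γ` within time `(0, T]`. -/
def nonrecurrent {X : Type*} (S : ℝ → X → X) (T : ℝ) (Γ : Set X) : Prop :=
  ∀ x ∈ Γ, ∀ t : ℝ, 0 < t → t ≤ T → S t x ∉ Γ

/-- `X_T`: the image of `Γ` under the flow over the time interval `[0, T]`. -/
def flowImage {X : Type*} (S : ℝ → X → X) (T : ℝ) (Γ : Set X) : Set X :=
  {x | ∃ s ∈ Set.Icc (0:ℝ) T, ∃ x₀ ∈ Γ, S s x₀ = x}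

/-- `φ` is the eigenfunction generated by `(λ, g)`:
`φ(S(s, x₀)) = e^{λ s} g(x₀)` for all `x₀ ∈ Γ` and `s ∈ [0, T]`. -/
def IsEigOn {X : Type*} (S : ℝ → X → X) (T : ℝ) (Γ : Set X) (lam : ℂ) (g : Γ → ℂ)
    (φ : X → ℂ) : Prop :=
  ∀ (x₀ : Γ) (s : ℝ), s ∈ Set.Icc (0:ℝ) T →
    φ (S s (x₀ : X)) = Complex.exp (lam * (s : ℂ)) * g x₀

/-- Auxiliary: well-definedness of the parametrization of `X_T`. -/
lemma nonrec_inj {X : Type*} (S : ℝ → X → X)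
    (hS0 : ∀ x, S 0 x = x)
    (hSadd : ∀ s t : ℝ, ∀ x, S (t + s) x = S t (S s x))
    (T : ℝ) (Γ : Set X) (hΓ : nonrecurrent S T Γ)
    {s s' : ℝ} {x₀ x₀' : X} (hx₀ : x₀ ∈ Γ) (hx₀' : x₀' ∈ Γ)
    (hs : s ∈ Set.Icc (0:ℝ) T) (hs' : s' ∈ Set.Icc (0:ℝ) T)
    (h : S s x₀ = S s' x₀') : s = s' ∧ x₀ = x₀' := by
  have key : ∀ a a' : ℝ, ∀ y y' : X, y ∈ Γ → y' ∈ Γ →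
      a ∈ Set.Icc (0:ℝ) T → a' ∈ Set.Icc (0:ℝ) T → a ≤ a' → S a y = S a' y' →
      a = a' ∧ y = y' := by
    intro a a' y y' hy hy' ha ha' hle heq
    have h1 : S (-a + a) y = S (-a) (S a y) := hSadd a (-a) y
    rw [neg_add_cancel, hS0] at h1
    have h2 : S (-a + a') y' = S (-a) (S a' y') := hSadd a' (-a) y'
    have h3 : y = S (-a + a') y' := by rw [h1, heq, h2]
    rcases eq_or_lt_of_le hle with rfl | hlt
    · refine ⟨rfl, ?_⟩
      rw [h3, neg_add_cancel, hS0]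
    · exfalso
      exact hΓ y' hy' (-a + a') (by linarith) (by
        have := ha.1; have := ha'.2; linarith) (h3 ▸ hy)
  rcases le_total s s' with hle | hle
  · exact key s s' x₀ x₀' hx₀ hx₀' hs hs' hle h
  · obtain ⟨h1, h2⟩ := key s' s x₀' x₀ hx₀' hx₀ hs' hs hle h.symm
    exact ⟨h1.symm, h2.symm⟩

theorem stmt1 {X : Type*} [MetricSpace X] (S : ℝ → X → X)
    (hS0 : ∀ x, S 0 x = x)
    (hSadd : ∀ s t : ℝ, ∀ x, S (t + s) x = S t (S s x))
    (hScont : Continuous fun p : ℝ × X => S p.1 p.2)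
    (T : ℝ) (hT : 0 < T) (Γ : Set X)
    (hΓ : nonrecurrent S T Γ)
    (lam : ℂ) (g : Γ → ℂ) :
    -- existence of the eigenfunction generated by `(λ, g)`
    (∃ φ : X → ℂ, IsEigOn S T Γ lam g φ) ∧
    -- uniqueness on `X_T`
    (∀ φ ψ : X → ℂ, IsEigOn S T Γ lam g φ → IsEigOn S T Γ lam g ψ →
      ∀ x ∈ flowImage S T Γ, φ x = ψ x) ∧
    -- it agrees with `g` on `Γ` and satisfies the Koopman eigenfunction relation
    (∀ φ : X → ℂ, IsEigOn S T Γ lam g φ →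
      (∀ x₀ : Γ, φ (x₀ : X) = g x₀) ∧
      (∀ (x₀ : Γ) (s t : ℝ), 0 ≤ s → 0 ≤ t → s + t ≤ T →
        φ (S t (S s (x₀ : X))) = Complex.exp (lam * (t : ℂ)) * φ (S s (x₀ : X)))) := by
  refine ⟨?_, ?_, ?_⟩
  · -- existence
    classical
    refine ⟨fun x => if h : x ∈ flowImage S T Γ then
        Complex.exp (lam * (h.choose : ℂ)) * g ⟨h.choose_spec.2.choose,
          h.choose_spec.2.choose_spec.1⟩ else 0, ?_⟩
    intro x₀ s hs
    have hx : S s (x₀ : X) ∈ flowImage S T Γ := ⟨s, hs, x₀, x₀.2, rfl⟩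
    simp only [dif_pos hx]
    obtain ⟨h1, h2⟩ := nonrec_inj S hS0 hSadd T Γ hΓ
      hx.choose_spec.2.choose_spec.1 x₀.2 hx.choose_spec.1 hs
      hx.choose_spec.2.choose_spec.2
    have : (⟨hx.choose_spec.2.choose, hx.choose_spec.2.choose_spec.1⟩ : Γ) = x₀ :=
      Subtype.ext h2
    rw [this, h1]
  · -- uniqueness
    rintro φ ψ hφ hψ x ⟨s, hs, x₀, hx₀, rfl⟩
    rw [hφ ⟨x₀, hx₀⟩ s hs, hψ ⟨x₀, hx₀⟩ s hs]
  · -- properties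
    intro φ hφ
    constructor
    · intro x₀
      have := hφ x₀ 0 ⟨le_refl 0, hT.le⟩
      rwa [hS0, Complex.ofReal_zero, mul_zero, Complex.exp_zero, one_mul] at this
    · intro x₀ s t hs ht hst
      have h1 : φ (S (t + s) (x₀ : X)) = Complex.exp (lam * ((t + s : ℝ) : ℂ)) * g x₀ :=
        hφ x₀ (t + s) ⟨by linarith, by linarith⟩
      rw [← hSadd s t, h1, hφ x₀ s ⟨hs, by linarith⟩, Complex.ofReal_add, mul_add,
        Complex.exp_add, mul_assoc]
end

section
/- Let n ≥ 2, let S : ℝ × ℝⁿ → ℝⁿ be a continuous flow, let X' ⊆ ℝⁿ be compact, let Y' ⊆ ℝⁿ be convex and compact, and let ζ : Y' → X' be a bijection such that ζ and ζ⁻¹ are Lipschitz continuous. Assume the rectifying conjugacy: for every y ∈ Y' and t ≥ 0, if either (i) y + t' eₙ ∈ Y' for all t' ∈ [0,t], or (ii) S(t', ζ(y)) ∈ X' for all t' ∈ [0,t], then y + t eₙ ∈ Y' and S(t, ζ(y)) = ζ(y + t eₙ), where eₙ = (0,…,0,1). Let Γ = {x¹,…,x^M} ⊆ X' be a finite set such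 that no two of its points lie on the same trajectory, i.e. for i ≠ j and all t ∈ ℝ one has S(t, xⁱ) ≠ xʲ. Then there exists a Lipschitz continuous function γ : ℝ^{n-1} → ℝ such that the set Γ̂ = ζ({y ∈ Y' : yₙ = γ(y₁,…,y_{n-1})}) satisfies: Γ ⊆ Γ̂, Γ̂ is closed in ℝⁿ, and for every x ∈ Γ̂ and every t > 0 such that S(t', x) ∈ X' for all t' ∈ [0,t], one has S(t, x) ∉ Γ̂. -/
theorem stmt3 {n : ℕ} (hn : 2 ≤ n)
    (S : ℝ → EuclideanSpace ℝ (Fin n) → EuclideanSpace ℝ (Fin n))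
    (hS0 : ∀ x, S 0 x = x)
    (hSadd : ∀ s t : ℝ, ∀ x, S (t + s) x = S t (S s x))
    (hScont : Continuous fun p : ℝ × EuclideanSpace ℝ (Fin n) => S p.1 p.2)
    (X' Y' : Set (EuclideanSpace ℝ (Fin n)))
    (hX'comp : IsCompact X') (hY'conv : Convex ℝ Y') (hY'comp : IsCompact Y')
    -- `ζ : Y' → X'` is a bijection with `ζ` and `ζ⁻¹` Lipschitz
    (ζ : Y' → X') (ζinv : X' → Y')
    (hli : Function.LeftInverse ζinv ζ) (hri : Function.RightInverse ζinv ζ)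
    (K₁ K₂ : NNReal) (hζ : LipschitzWith K₁ ζ) (hζinv : LipschitzWith K₂ ζinv)
    -- `eₙ = (0, …, 0, 1)`
    (en : EuclideanSpace ℝ (Fin n))
    (hen : en = EuclideanSpace.single (⟨n - 1, by omega⟩ : Fin n) (1 : ℝ))
    -- the rectifying conjugacy
    (hrect : ∀ (y : Y') (t : ℝ), 0 ≤ t →
      ((∀ t' ∈ Set.Icc (0:ℝ) t, (y : EuclideanSpace ℝ (Fin n)) + t' • en ∈ Y') ∨
        (∀ t' ∈ Set.Icc (0:ℝ) t, S t' ((ζ y : X') : EuclideanSpace ℝ (Fin n)) ∈ X')) →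
      ∃ hmem : (y : EuclideanSpace ℝ (Fin n)) + t • en ∈ Y',
        S t ((ζ y : X') : EuclideanSpace ℝ (Fin n)) =
          ((ζ ⟨(y : EuclideanSpace ℝ (Fin n)) + t • en, hmem⟩ : X') :
            EuclideanSpace ℝ (Fin n)))
    -- the finite set `Γ = {x¹, …, x^M} ⊆ X'`, no two points on the same trajectory
    (M : ℕ) (xp : Fin M → EuclideanSpace ℝ (Fin n))
    (hxpX' : ∀ j, xp j ∈ X')
    (htraj : ∀ i j, i ≠ j → ∀ t : ℝ, S t (xp i) ≠ xp j) :
    ∃ (K : NNReal) (γ : EuclideanSpace ℝ (Fin (n - 1)) → ℝ),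
      LipschitzWith K γ ∧
      -- `Γ̂ = ζ({y ∈ Y' : yₙ = γ(y₁, …, y_{n-1})})`
      (∀ j, xp j ∈
        {x : EuclideanSpace ℝ (Fin n) | ∃ y : Y',
          ((ζ y : X') : EuclideanSpace ℝ (Fin n)) = x ∧
          (y : EuclideanSpace ℝ (Fin n)) (⟨n - 1, by omega⟩ : Fin n) =
            γ (WithLp.toLp 2 fun i : Fin (n - 1) =>
              (y : EuclideanSpace ℝ (Fin n)) (Fin.castLE (Nat.sub_le n 1) i))}) ∧
      IsClosed
        {x : EuclideanSpace ℝ (Fin n) | ∃ y : Y',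
          ((ζ y : X') : EuclideanSpace ℝ (Fin n)) = x ∧
          (y : EuclideanSpace ℝ (Fin n)) (⟨n - 1, by omega⟩ : Fin n) =
            γ (WithLp.toLp 2 fun i : Fin (n - 1) =>
              (y : EuclideanSpace ℝ (Fin n)) (Fin.castLE (Nat.sub_le n 1) i))} ∧
      ∀ x ∈
        {x : EuclideanSpace ℝ (Fin n) | ∃ y : Y',
          ((ζ y : X') : EuclideanSpace ℝ (Fin n)) = x ∧
          (y : EuclideanSpace ℝ (Fin n)) (⟨n - 1, by omega⟩ : Fin n) =
            γ (WithLp.toLp 2 fun i : Fin (n - 1) =>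
              (y : EuclideanSpace ℝ (Fin n)) (Fin.castLE (Nat.sub_le n 1) i))},
        ∀ t : ℝ, 0 < t → (∀ t' ∈ Set.Icc (0:ℝ) t, S t' x ∈ X') →
          S t x ∉
            {x : EuclideanSpace ℝ (Fin n) | ∃ y : Y',
              ((ζ y : X') : EuclideanSpace ℝ (Fin n)) = x ∧
              (y : EuclideanSpace ℝ (Fin n)) (⟨n - 1, by omega⟩ : Fin n) =
                γ (WithLp.toLp 2 fun i : Fin (n - 1) =>
                  (y : EuclideanSpace ℝ (Fin n)) (Fin.castLE (Nat.sub_le n 1) i))} := by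
  classical
  set idx : Fin n := ⟨n - 1, by omega⟩ with hidx
  have hen_ne : ∀ k : Fin n, k ≠ idx → en k = 0 := by
    intro k hk
    rw [hen, EuclideanSpace.single_apply, if_neg hk]
  have hen_idx : en idx = 1 := by
    rw [hen, EuclideanSpace.single_apply, if_pos rfl]
  have hen_cast : ∀ i : Fin (n - 1), en (Fin.castLE (Nat.sub_le n 1) i) = 0 := by
    intro i
    apply hen_ne
    intro h
    have h' := congrArg Fin.val h
    simp only [Fin.coe_castLE] at h'
    have := i.2
    have h3 : (idx : ℕ) = n - 1 := rfl
    omega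
  -- the points and values
  set yy : Fin M → Y' := fun j => ζinv ⟨xp j, hxpX' j⟩ with hyy
  set p : Fin M → EuclideanSpace ℝ (Fin (n - 1)) :=
    fun j => WithLp.toLp 2 (fun i : Fin (n - 1) =>
      ((yy j : EuclideanSpace ℝ (Fin n))) (Fin.castLE (Nat.sub_le n 1) i)) with hp
  set v : Fin M → ℝ := fun j => ((yy j : EuclideanSpace ℝ (Fin n))) idx with hv
  have hζyy : ∀ j, ((ζ (yy j) : X') : EuclideanSpace ℝ (Fin n)) = xp j := by
    intro j
    exact congrArg Subtype.val (hri ⟨xp j, hxpX' j⟩)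
  -- key: equal projections force same trajectory
  have hpv : ∀ i j : Fin M, p i = p j → v i ≤ v j → S (v j - v i) (xp i) = xp j := by
    intro i j hpij hle
    set t : ℝ := v j - v i with htdef
    have ht : 0 ≤ t := by simp [htdef]; linarith
    have hEq : (yy i : EuclideanSpace ℝ (Fin n)) + t • en = (yy j : EuclideanSpace ℝ (Fin n)) := by
      ext k
      by_cases hk : k = idx
      · subst hk
        have : (yy i : EuclideanSpace ℝ (Fin n)) idx + t * en idx
            = (yy j : EuclideanSpace ℝ (Fin n)) idx := by
          rw [hen_idx]; change v i + t * 1 = v j; rw [htdef]; ring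
        simpa [PiLp.add_apply, PiLp.smul_apply, smul_eq_mul] using this
      · have hlt : k.1 < n - 1 := by
          by_contra h
          apply hk
          have hk2 := k.2
          refine Fin.ext ?_
          show k.1 = n - 1
          omega
        have hkc : Fin.castLE (Nat.sub_le n 1) (⟨k.1, hlt⟩ : Fin (n - 1)) = k := Fin.ext rfl
        have h2 := congrArg (fun z => z (⟨k.1, hlt⟩ : Fin (n - 1))) hpij
        simp only [hp] at h2
        rw [hkc] at h2
        simpa [PiLp.add_apply, PiLp.smul_apply, smul_eq_mul, hen_ne k hk] using h2
    have hseg : ∀ t' ∈ Set.Icc (0:ℝ) t, (yy i : EuclideanSpace ℝ (Fin n)) + t' • en ∈ Y' := by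
      intro t' ht'
      rcases eq_or_lt_of_le ht with h0 | h0
      · have ht'0 : t' = 0 := le_antisymm (h0 ▸ ht'.2) ht'.1
        simpa [ht'0] using (yy i).2
      · have hts : t' / t * t = t' := div_mul_cancel₀ _ (ne_of_gt h0)
        have hcomb := hY'conv (yy i).2 (yy j).2
          (a := 1 - t' / t) (b := t' / t)
          (by
            have : t' / t ≤ 1 := (div_le_one h0).mpr ht'.2
            linarith)
          (div_nonneg ht'.1 ht)
          (by ring)
        have heq2 : (1 - t' / t) • (yy i : EuclideanSpace ℝ (Fin n)) +
            (t' / t) • (yy j : EuclideanSpace ℝ (Fin n))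
            = (yy i : EuclideanSpace ℝ (Fin n)) + (t' / t * t) • en := by
          rw [← hEq]
          module
        rw [hts] at heq2
        rwa [heq2] at hcomb
    obtain ⟨hmem, hS⟩ := hrect (yy i) t ht (Or.inl hseg)
    have hsub : (⟨(yy i : EuclideanSpace ℝ (Fin n)) + t • en, hmem⟩ : Y') = yy j :=
      Subtype.ext hEq
    rw [hζyy i, hsub, hζyy j] at hS
    exact hS
  have hpinj : Function.Injective p := by
    intro i j hpij
    by_contra hne
    rcases le_total (v i) (v j) with hle | hle
    · exact htraj i j hne _ (hpv i j hpij hle)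
    · exact htraj j i (Ne.symm hne) _ (hpv j i hpij.symm hle)
  -- the Lipschitz constant
  set K : NNReal := Finset.univ.sup
    (fun ij : Fin M × Fin M => nndist (v ij.1) (v ij.2) / nndist (p ij.1) (p ij.2)) with hK
  have hKb : ∀ i j : Fin M, nndist (v i) (v j) ≤ K * nndist (p i) (p j) := by
    intro i j
    by_cases hij : i = j
    · simp [hij]
    · have hne : nndist (p i) (p j) ≠ 0 := by
        simp only [ne_eq, nndist_eq_zero]
        exact fun h => hij (hpinj h)
      have hle : nndist (v i) (v j) / nndist (p i) (p j) ≤ K :=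
        Finset.le_sup (f := fun ij : Fin M × Fin M =>
          nndist (v ij.1) (v ij.2) / nndist (p ij.1) (p ij.2)) (Finset.mem_univ (i, j))
      rw [div_le_iff₀ (pos_iff_ne_zero.mpr hne)] at hle
      exact hle
  -- the pre-Lipschitz function on the finite set
  set f : EuclideanSpace ℝ (Fin (n - 1)) → ℝ :=
    fun z => if h : ∃ j, p j = z then v h.choose else 0 with hfdef
  have hf : ∀ j, f (p j) = v j := by
    intro j
    have h : ∃ k, p k = p j := ⟨j, rfl⟩
    simp only [hfdef, dif_pos h]
    exact congrArg v (hpinj h.choose_spec)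
  have hfl : LipschitzOnWith K f (Set.range p) := by
    rw [lipschitzOnWith_iff_dist_le_mul]
    rintro z ⟨i, rfl⟩ w ⟨j, rfl⟩
    rw [hf i, hf j, dist_nndist, dist_nndist]
    exact_mod_cast hKb i j
  obtain ⟨γ, hγlip, hγeq⟩ := hfl.extend_real
  have hγp : ∀ j, γ (p j) = v j := by
    intro j
    rw [← hγeq ⟨j, rfl⟩]
    exact hf j
  refine ⟨K, γ, hγlip, ?_, ?_, ?_⟩
  · -- membership of the xp j
    intro j
    exact ⟨yy j, hζyy j, (hγp j).symm⟩
  · -- closedness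
    have hset : {x : EuclideanSpace ℝ (Fin n) | ∃ y : Y',
          ((ζ y : X') : EuclideanSpace ℝ (Fin n)) = x ∧
          (y : EuclideanSpace ℝ (Fin n)) (⟨n - 1, by omega⟩ : Fin n) =
            γ (WithLp.toLp 2 fun i : Fin (n - 1) =>
              (y : EuclideanSpace ℝ (Fin n)) (Fin.castLE (Nat.sub_le n 1) i))}
        = (fun y : Y' => ((ζ y : X') : EuclideanSpace ℝ (Fin n))) ''
          {y : Y' | (y : EuclideanSpace ℝ (Fin n)) idx =
            γ (WithLp.toLp 2 fun i : Fin (n - 1) =>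
              (y : EuclideanSpace ℝ (Fin n)) (Fin.castLE (Nat.sub_le n 1) i))} := by
      ext x
      constructor
      · rintro ⟨y, h1, h2⟩; exact ⟨y, h2, h1⟩
      · rintro ⟨y, h2, h1⟩; exact ⟨y, h1, h2⟩
    rw [hset]
    haveI : CompactSpace Y' := isCompact_iff_compactSpace.mp hY'comp
    have hq : Continuous fun y : EuclideanSpace ℝ (Fin n) =>
        (WithLp.toLp 2 (fun i : Fin (n - 1) => y (Fin.castLE (Nat.sub_le n 1) i)) :
          EuclideanSpace ℝ (Fin (n - 1))) := by
      have : IsLinearMap ℝ fun y : EuclideanSpace ℝ (Fin n) =>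
          (WithLp.toLp 2 (fun i : Fin (n - 1) => y (Fin.castLE (Nat.sub_le n 1) i)) :
            EuclideanSpace ℝ (Fin (n - 1))) :=
        ⟨fun _ _ => rfl, fun _ _ => rfl⟩
      exact LinearMap.continuous_of_finiteDimensional this.mk'
    have hcl : IsClosed {y : Y' | (y : EuclideanSpace ℝ (Fin n)) idx =
        γ (WithLp.toLp 2 fun i : Fin (n - 1) =>
          (y : EuclideanSpace ℝ (Fin n)) (Fin.castLE (Nat.sub_le n 1) i))} := by
      apply isClosed_eq
      · exact ((EuclideanSpace.proj idx : EuclideanSpace ℝ (Fin n) →L[ℝ] ℝ).continuous).comp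
          continuous_subtype_val
      · exact hγlip.continuous.comp (hq.comp continuous_subtype_val)
    exact (hcl.isCompact.image
      (continuous_subtype_val.comp hζ.continuous)).isClosed
  · -- no return to the section
    rintro x ⟨y0, hy0x, hy0γ⟩ t ht hX
    obtain ⟨hmem, hS⟩ := hrect y0 t ht.le (Or.inr (by
      intro t' ht'
      rw [hy0x]
      exact hX t' ht'))
    rintro ⟨y1, hy1x, hy1γ⟩
    have hy1 : y1 = ⟨(y0 : EuclideanSpace ℝ (Fin n)) + t • en, hmem⟩ := by
      apply hli.injective
      apply Subtype.ext
      rw [hy1x, ← hy0x]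
      exact hS
    subst hy1
    have hcast : (fun i : Fin (n - 1) =>
        ((y0 : EuclideanSpace ℝ (Fin n)) + t • en) (Fin.castLE (Nat.sub_le n 1) i))
        = (fun i : Fin (n - 1) =>
          (y0 : EuclideanSpace ℝ (Fin n)) (Fin.castLE (Nat.sub_le n 1) i)) := by
      funext i
      simp [PiLp.add_apply, PiLp.smul_apply, hen_cast i]
    simp only at hy1γ
    rw [hcast] at hy1γ
    have hidx' : ((y0 : EuclideanSpace ℝ (Fin n)) + t • en) idx
        = (y0 : EuclideanSpace ℝ (Fin n)) idx + t := by
      simp [PiLp.add_apply, PiLp.smul_apply, hen_idx]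
    rw [hidx', ← hy0γ] at hy1γ
    linarith
end

section
/- Let Γ ⊆ X be compact and non-recurrent. Let Λ₀ ⊆ ℂ be closed under complex conjugation and contain at least one element with nonzero real part, and let Λ = lattice(Λ₀) = { Σ_{k=1}^{p} α_k λ_k : λ_k ∈ Λ₀, α_k ∈ ℕ₀, p ∈ ℕ }. Let G = {g_i}_{i=1}^∞ be a countable family of continuous functions g_i : Γ → ℂ whose linear span is dense in C(Γ;ℂ) with respect to the supremum norm. Then the linear span of the eigenfunctions generated by pairs (λ, g) with λ ∈ Λ and g ∈ G is dense in C(X_T;ℂ): for every continuous h : X_T → ℂ and every ε > 0 there exist N ∈ ℕ, λ₁,…,λ_N ∈ Λ, g'₁,…,g'_N ∈ G and c₁,…,c_N ∈ ℂ such that sup_{x ∈ X_T} | h(x) − Σ_{i=1}^N c_i φ_i(x) | < ε, where φ_i is the eigenfunction generated by (λ_i, g'_i). -/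
/-- `lattice(Λ₀)`: all finite sums `Σ α_k λ_k` with `λ_k ∈ Λ₀`, `α_k ∈ ℕ₀`. -/
def latticeSet (Λ₀ : Set ℂ) : Set ℂ :=
  {z | ∃ (p : ℕ) (lam : Fin p → ℂ) (α : Fin p → ℕ),
    (∀ k, lam k ∈ Λ₀) ∧ z = ∑ k, (α k : ℂ) * lam k}

section aux
variable {X : Type*} (S : ℝ → X → X) (T : ℝ) (Γ : Set X)

lemma lattice_zero (Λ₀ : Set ℂ) : (0:ℂ) ∈ latticeSet Λ₀ :=
  ⟨0, ![], ![], fun k => k.elim0, by simp⟩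

lemma lattice_of_mem {Λ₀ : Set ℂ} {z : ℂ} (hz : z ∈ Λ₀) : z ∈ latticeSet Λ₀ :=
  ⟨1, ![z], ![1], fun k => by fin_cases k <;> simpa, by simp⟩

lemma lattice_add {Λ₀ : Set ℂ} {z w : ℂ} (hz : z ∈ latticeSet Λ₀)
    (hw : w ∈ latticeSet Λ₀) : z + w ∈ latticeSet Λ₀ := by
  obtain ⟨p, lam, α, hmem, rfl⟩ := hz
  obtain ⟨q, lam', α', hmem', rfl⟩ := hw
  refine ⟨p + q, Fin.append lam lam', Fin.append α α', ?_, ?_⟩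
  · intro k
    refine Fin.addCases (fun i => ?_) (fun i => ?_) k
    · rw [Fin.append_left]; exact hmem i
    · rw [Fin.append_right]; exact hmem' i
  · rw [Fin.sum_univ_add]
    simp [Fin.append_left, Fin.append_right]

lemma lattice_conj {Λ₀ : Set ℂ} (hc : ∀ z ∈ Λ₀, (starRingEnd ℂ) z ∈ Λ₀) {z : ℂ}
    (hz : z ∈ latticeSet Λ₀) : (starRingEnd ℂ) z ∈ latticeSet Λ₀ := by
  obtain ⟨p, lam, α, hmem, rfl⟩ := hz
  refine ⟨p, fun k => (starRingEnd ℂ) (lam k), α, fun k => hc _ (hmem k), ?_⟩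
  rw [map_sum]
  simp

lemma flow_unique (hS0 : ∀ x, S 0 x = x)
    (hSadd : ∀ s t : ℝ, ∀ x, S (t + s) x = S t (S s x))
    (hΓ : nonrecurrent S T Γ) {s s' : ℝ} {x₀ x₀' : X}
    (hs : s ∈ Set.Icc (0:ℝ) T) (hs' : s' ∈ Set.Icc (0:ℝ) T)
    (hx₀ : x₀ ∈ Γ) (hx₀' : x₀' ∈ Γ) (heq : S s x₀ = S s' x₀') :
    s = s' ∧ x₀ = x₀' := by
  have key : ∀ (a b : ℝ) (y y' : X), a ∈ Set.Icc (0:ℝ) T → b ∈ Set.Icc (0:ℝ) T →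
      y ∈ Γ → y' ∈ Γ → S a y = S b y' → b ≤ a → a = b ∧ y = y' := by
    intro a b y y' ha hb hy hy' he hba
    have h1 : S (a - b) y = y' := by
      have e1 : S (-b + a) y = S (-b) (S a y) := hSadd a (-b) y
      have e2 : S (-b + b) y' = S (-b) (S b y') := hSadd b (-b) y'
      rw [he, ← e2] at e1
      rw [show a - b = -b + a by ring]
      simpa [hS0] using e1
    rcases eq_or_lt_of_le hba with hab | hab
    · subst hab
      refine ⟨rfl, ?_⟩
      simpa [hS0] using h1
    · exfalso
      exact hΓ y hy (a - b) (by linarith) (by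
        have := ha.2; have := hb.1; linarith) (h1 ▸ hy')
  rcases le_total s' s with hle | hle
  · exact key s s' x₀ x₀' hs hs' hx₀ hx₀' heq hle
  · obtain ⟨h1, h2⟩ := key s' s x₀' x₀ hs' hs hx₀' hx₀ heq.symm hle
    exact ⟨h1.symm, h2.symm⟩

open scoped Classical in
/-- the eigenfunction generated by `(lam, g)`, defined by choice. -/
noncomputable def eig (lam : ℂ) (g : Γ → ℂ) (x : X) : ℂ :=
  if hx : x ∈ flowImage S T Γ then
    Complex.exp (lam * (hx.choose : ℂ)) *
      g ⟨hx.choose_spec.2.choose, hx.choose_spec.2.choose_spec.1⟩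
  else 0

lemma eig_isEig (hS0 : ∀ x, S 0 x = x)
    (hSadd : ∀ s t : ℝ, ∀ x, S (t + s) x = S t (S s x))
    (hΓ : nonrecurrent S T Γ) (lam : ℂ) (g : Γ → ℂ) :
    IsEigOn S T Γ lam g (eig S T Γ lam g) := by
  intro x₀ s hs
  have hx : S s (x₀ : X) ∈ flowImage S T Γ := ⟨s, hs, x₀, x₀.2, rfl⟩
  rw [eig, dif_pos hx]
  obtain ⟨h1, h2⟩ := flow_unique S T Γ hS0 hSadd hΓ hx.choose_spec.1 hs
    hx.choose_spec.2.choose_spec.1 x₀.2 hx.choose_spec.2.choose_spec.2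
  congr 1
  · rw [h1]
  · congr 1
    exact Subtype.ext h2

end aux


section basicM
noncomputable def basicM {X : Type*} [TopologicalSpace X] (T : ℝ) (Γ : Set X) (lam : ℂ)
    (f : C(↥Γ, ℂ)) : C(Set.Icc (0:ℝ) T × ↥Γ, ℂ) :=
  ⟨fun p => Complex.exp (lam * ((p.1 : ℝ) : ℂ)) * f p.2, by fun_prop⟩

variable {X : Type*} [TopologicalSpace X] (T : ℝ) (Γ : Set X)

lemma basicM_apply (lam : ℂ) (f : C(↥Γ, ℂ)) (p) :
    basicM T Γ lam f p = Complex.exp (lam * ((p.1 : ℝ) : ℂ)) * f p.2 := rfl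

lemma basicM_one : basicM T Γ 0 1 = 1 := by
  ext p; simp [basicM]

lemma basicM_mul (lam mu : ℂ) (f f' : C(↥Γ, ℂ)) :
    basicM T Γ lam f * basicM T Γ mu f' = basicM T Γ (lam + mu) (f * f') := by
  ext p
  simp [basicM, add_mul, Complex.exp_add]
  ring

lemma basicM_star (lam : ℂ) (f : C(↥Γ, ℂ)) :
    star (basicM T Γ lam f) = basicM T Γ ((starRingEnd ℂ) lam) (star f) := by
  ext p
  simp [basicM, ← Complex.exp_conj, Complex.conj_ofReal]

end basicM

theorem stmt5 {X : Type*} [MetricSpace X] (S : ℝ → X → X)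
    (hS0 : ∀ x, S 0 x = x)
    (hSadd : ∀ s t : ℝ, ∀ x, S (t + s) x = S t (S s x))
    (hScont : Continuous fun p : ℝ × X => S p.1 p.2)
    (T : ℝ) (hT : 0 < T) (Γ : Set X)
    (hΓcomp : IsCompact Γ) (hΓ : nonrecurrent S T Γ)
    (Λ₀ : Set ℂ)
    (hconj : ∀ z ∈ Λ₀, (starRingEnd ℂ) z ∈ Λ₀)
    (hre : ∃ z ∈ Λ₀, z.re ≠ 0)
    -- `G = {g_i}_{i=1}^∞`, continuous, with dense span in `C(Γ; ℂ)` (sup norm)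
    (g : ℕ → Γ → ℂ) (hgcont : ∀ i, Continuous (g i))
    (hgdense : ∀ f : Γ → ℂ, Continuous f → ∀ ε : ℝ, 0 < ε →
      ∃ (N : ℕ) (c : Fin N → ℂ) (k : Fin N → ℕ),
        ∀ x : Γ, ‖f x - ∑ i, c i * g (k i) x‖ < ε) :
    -- the span of the eigenfunctions generated by `(λ, g_i)`, `λ ∈ lattice(Λ₀)`,
    -- is dense in `C(X_T; ℂ)` in the sup norm
    ∀ h : X → ℂ, ContinuousOn h (flowImage S T Γ) → ∀ ε : ℝ, 0 < ε →
      ∃ (N : ℕ) (lam : Fin N → ℂ) (k : Fin N → ℕ) (c : Fin N → ℂ)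
        (φ : Fin N → X → ℂ),
        (∀ i, lam i ∈ latticeSet Λ₀) ∧
        (∀ i, IsEigOn S T Γ (lam i) (g (k i)) (φ i)) ∧
        ∀ x ∈ flowImage S T Γ, ‖h x - ∑ i, c i * φ i x‖ < ε := by
  intro h hcont ε hε
  haveI : CompactSpace ↥Γ := isCompact_iff_compactSpace.mp hΓcomp
  set Y := (Set.Icc (0:ℝ) T × ↥Γ) with hY
  -- the set of all monomials with arbitrary continuous Γ-part
  set M : Set C(Y, ℂ) :=
    {F | ∃ lam ∈ latticeSet Λ₀, ∃ f : C(↥Γ, ℂ), F = basicM T Γ lam f} with hM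
  -- the set of generating monomials with Γ-part from the family g
  set E : Set C(Y, ℂ) :=
    {F | ∃ lam ∈ latticeSet Λ₀, ∃ k : ℕ, F = basicM T Γ lam ⟨g k, hgcont k⟩} with hE
  set V : Submodule ℂ C(Y, ℂ) := (Submodule.span ℂ E).topologicalClosure with hV
  -- each monomial lies in V
  have hMV : M ⊆ (V : Set C(Y, ℂ)) := by
    rintro F ⟨lam, hlam, f, rfl⟩
    have hVc : (V : Set C(Y,ℂ)) = closure (Submodule.span ℂ E : Set C(Y,ℂ)) := rfl
    rw [hVc, Metric.mem_closure_iff]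
    intro δ hδ
    set C : ℝ := Real.exp (|lam.re| * T) with hC
    have hCpos : 0 < C := Real.exp_pos _
    obtain ⟨N, c, k, hck⟩ := hgdense f f.continuous (δ / C) (by positivity)
    refine ⟨∑ i, c i • basicM T Γ lam ⟨g (k i), hgcont (k i)⟩, ?_, ?_⟩
    · exact Submodule.sum_mem _ fun i _ => Submodule.smul_mem _ _
        (Submodule.subset_span ⟨lam, hlam, k i, rfl⟩)
    · rw [dist_eq_norm]
      rw [ContinuousMap.norm_lt_iff _ hδ]
      intro p
      have hexp : ‖Complex.exp (lam * ((p.1 : ℝ) : ℂ))‖ ≤ C := by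
        rw [Complex.norm_exp]
        apply Real.exp_le_exp.2
        have h1 : (0:ℝ) ≤ (p.1 : ℝ) := p.1.2.1
        have h2 : (p.1 : ℝ) ≤ T := p.1.2.2
        have : (lam * ((p.1 : ℝ) : ℂ)).re = lam.re * (p.1 : ℝ) := by simp
        rw [this]
        calc lam.re * (p.1 : ℝ) ≤ |lam.re| * (p.1 : ℝ) :=
              mul_le_mul_of_nonneg_right (le_abs_self _) h1
          _ ≤ |lam.re| * T := mul_le_mul_of_nonneg_left h2 (abs_nonneg _)
      have hsum : (∑ i, c i • basicM T Γ lam ⟨g (k i), hgcont (k i)⟩) p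
          = Complex.exp (lam * ((p.1 : ℝ) : ℂ)) * ∑ i, c i * g (k i) p.2 := by
        rw [ContinuousMap.sum_apply, Finset.mul_sum]
        refine Finset.sum_congr rfl fun i _ => ?_
        simp [basicM]
        ring
      have : (basicM T Γ lam f - ∑ i, c i • basicM T Γ lam ⟨g (k i), hgcont (k i)⟩) p
          = Complex.exp (lam * ((p.1 : ℝ) : ℂ)) * (f p.2 - ∑ i, c i * g (k i) p.2) := by
        rw [ContinuousMap.sub_apply, hsum, basicM, mul_sub]
        rfl
      rw [this]
      rw [norm_mul]
      calc ‖Complex.exp (lam * ((p.1 : ℝ) : ℂ))‖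
            * ‖f p.2 - ∑ i, c i * g (k i) p.2‖
          ≤ C * ‖f p.2 - ∑ i, c i * g (k i) p.2‖ :=
            mul_le_mul_of_nonneg_right hexp (norm_nonneg _)
        _ < C * (δ / C) := by
            exact mul_lt_mul_of_pos_left (hck p.2) hCpos
        _ = δ := by field_simp
  -- M spans a star subalgebra
  have hMmul : ∀ x ∈ M, ∀ y ∈ M, x * y ∈ M := by
    rintro x ⟨lam, hlam, f, rfl⟩ y ⟨mu, hmu, f', rfl⟩
    exact ⟨lam + mu, lattice_add hlam hmu, f * f', basicM_mul T Γ lam mu f f'⟩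
  have hMone : (1 : C(Y, ℂ)) ∈ M := ⟨0, lattice_zero Λ₀, 1, (basicM_one T Γ).symm⟩
  have hmul : ∀ x y : C(Y,ℂ), x ∈ Submodule.span ℂ M → y ∈ Submodule.span ℂ M →
      x * y ∈ Submodule.span ℂ M := by
    intro x y hx hy
    have := Submodule.mul_mem_mul hx hy
    rw [Submodule.span_mul_span] at this
    refine Submodule.span_le.2 ?_ this
    rintro z ⟨a, ha, b, hb, rfl⟩
    exact Submodule.subset_span (hMmul a ha b hb)
  set A : StarSubalgebra ℂ C(Y, ℂ) :=
    { toSubalgebra := (Submodule.span ℂ M).toSubalgebra (Submodule.subset_span hMone) hmul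
      star_mem' := by
        intro a ha
        show star a ∈ Submodule.span ℂ M
        have ha' : a ∈ Submodule.span ℂ M := ha
        clear ha
        induction ha' using Submodule.span_induction with
        | mem x hx =>
          obtain ⟨lam, hlam, f, rfl⟩ := hx
          exact Submodule.subset_span
            ⟨(starRingEnd ℂ) lam, lattice_conj hconj hlam, star f, basicM_star T Γ lam f⟩
        | zero => simpa using Submodule.zero_mem _
        | add x y _ _ hx hy => rw [star_add]; exact Submodule.add_mem _ hx hy
        | smul c x _ hx => rw [star_smul]; exact Submodule.smul_mem _ _ hx } with hA
  -- A separates points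
  have hsep : A.SeparatesPoints := by
    intro p q hpq
    by_cases h2 : p.2 = q.2
    · have h1 : (p.1 : ℝ) ≠ (q.1 : ℝ) := by
        intro hc
        exact hpq (Prod.ext (Subtype.ext hc) h2)
      obtain ⟨z, hz, hzre⟩ := hre
      refine ⟨_, ⟨basicM T Γ z 1, ?_, rfl⟩, ?_⟩
      · show basicM T Γ z 1 ∈ Submodule.span ℂ M
        exact Submodule.subset_span ⟨z, lattice_of_mem hz, 1, rfl⟩
      · intro hc
        have hc' := congrArg (‖·‖) hc
        simp only [basicM, ContinuousMap.coe_mk, ContinuousMap.one_apply, mul_one,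
          Complex.norm_exp] at hc'
        have hre' := Real.exp_injective hc'
        simp only [Complex.mul_re, Complex.ofReal_re, Complex.ofReal_im, mul_zero,
          sub_zero] at hre'
        exact h1 (mul_left_cancel₀ hzre hre')
    · refine ⟨_, ⟨basicM T Γ 0 ⟨fun y => ((dist (y:X) (q.2:X) : ℝ) : ℂ), by fun_prop⟩,
        ?_, rfl⟩, ?_⟩
      · show _ ∈ Submodule.span ℂ M
        exact Submodule.subset_span ⟨0, lattice_zero Λ₀, _, rfl⟩
      · intro hc
        simp only [basicM, ContinuousMap.coe_mk, zero_mul, Complex.exp_zero, one_mul] at hc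
        rw [Complex.ofReal_inj] at hc
        rw [dist_self] at hc
        exact h2 (Subtype.ext (dist_eq_zero.mp hc))
  have htop := ContinuousMap.starSubalgebra_topologicalClosure_eq_top_of_separatesPoints A hsep
  -- H in V
  set H : C(Y, ℂ) := ⟨fun p => h (S (p.1 : ℝ) (p.2 : X)),
    hcont.comp_continuous (hScont.comp
      ((continuous_subtype_val.comp continuous_fst).prodMk
        (continuous_subtype_val.comp continuous_snd)))
      (fun p => ⟨(p.1 : ℝ), p.1.2, (p.2 : X), p.2.2, rfl⟩)⟩ with hH
  have hHV : H ∈ V := by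
    have hAV : (A : Set C(Y,ℂ)) ⊆ (V : Set C(Y,ℂ)) := by
      intro a ha
      have : a ∈ Submodule.span ℂ M := ha
      exact Submodule.span_le.2 (hMV.trans (le_refl _)) this
    have hclosed : IsClosed (V : Set C(Y,ℂ)) := Submodule.isClosed_topologicalClosure _
    have : closure (A : Set C(Y,ℂ)) ⊆ (V : Set C(Y,ℂ)) := closure_minimal hAV hclosed
    apply this
    have : H ∈ A.topologicalClosure := htop ▸ trivial
    exact this
  -- extract an approximant
  have : H ∈ closure (Submodule.span ℂ E : Set C(Y,ℂ)) := hHV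
  rw [Metric.mem_closure_iff] at this
  obtain ⟨F, hFspan, hFdist⟩ := this ε hε
  rw [dist_eq_norm] at hFdist
  rw [SetLike.mem_coe, Submodule.mem_span_set] at hFspan
  obtain ⟨co, hsupp, hsum⟩ := hFspan
  set t := co.support with ht
  set N := t.card with hN
  set e : Fin N ≃ {x // x ∈ t} := t.equivFin.symm with he
  have hmemE : ∀ i : Fin N, ∃ lam ∈ latticeSet Λ₀, ∃ k : ℕ,
      ((e i : C(Y,ℂ))) = basicM T Γ lam ⟨g k, hgcont k⟩ := fun i => hsupp (e i).2
  choose lam hlam k hk using hmemE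
  refine ⟨N, lam, k, fun i => co (e i), fun i => eig S T Γ (lam i) (g (k i)), hlam,
    fun i => eig_isEig S T Γ hS0 hSadd hΓ _ _, ?_⟩
  rintro x ⟨s, hs, x₀, hx₀, rfl⟩
  set p : Y := (⟨s, hs⟩, ⟨x₀, hx₀⟩) with hp
  have hφ : ∀ i : Fin N, eig S T Γ (lam i) (g (k i)) (S s x₀) = ((e i : C(Y,ℂ))) p := by
    intro i
    rw [hk i]
    exact eig_isEig S T Γ hS0 hSadd hΓ (lam i) (g (k i)) ⟨x₀, hx₀⟩ s hs
  have hsum2 : ∑ i, co (e i) * eig S T Γ (lam i) (g (k i)) (S s x₀) = F p := by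
    have : ∑ i, co (e i) * eig S T Γ (lam i) (g (k i)) (S s x₀)
        = ∑ i, co (e i) * ((e i : C(Y,ℂ))) p := by
      refine Finset.sum_congr rfl fun i _ => by rw [hφ i]
    rw [this]
    rw [Equiv.sum_comp e (fun y : {x // x ∈ t} => co y * ((y : C(Y,ℂ))) p)]
    rw [← hsum]
    rw [Finsupp.sum]
    rw [ContinuousMap.sum_apply]
    rw [← Finset.sum_attach t (fun y => (co y • y) p)]
    refine Finset.sum_congr rfl fun y _ => ?_
    simp
  have hhx : h (S s x₀) = H p := rfl
  rw [hsum2, hhx]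
  calc ‖H p - F p‖ = ‖(H - F) p‖ := by rw [ContinuousMap.sub_apply]
    _ ≤ ‖H - F‖ := ContinuousMap.norm_coe_le_norm _ _
    _ < ε := hFdist
end

section
/- Let Γ ⊆ X be non-recurrent, let λ ∈ ℂ, and let g, g̃ : Γ → ℂ be bounded. Let φ be the eigenfunction generated by (λ, g) and φ̃ the eigenfunction generated by (λ, g̃). Then for every x ∈ X_T, |φ(x) − φ̃(x)| ≤ max{1, e^{Re(λ)·T}} · sup_{x₀ ∈ Γ} |g(x₀) − g̃(x₀)|. -/
theorem stmt7 {X : Type*} [MetricSpace X] (S : ℝ → X → X)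
    (hS0 : ∀ x, S 0 x = x)
    (hSadd : ∀ s t : ℝ, ∀ x, S (t + s) x = S t (S s x))
    (hScont : Continuous fun p : ℝ × X => S p.1 p.2)
    (T : ℝ) (hT : 0 < T) (Γ : Set X)
    (hΓ : nonrecurrent S T Γ)
    (lam : ℂ) (g g' : Γ → ℂ)
    (hgb : ∃ C : ℝ, ∀ x₀ : Γ, ‖g x₀‖ ≤ C)
    (hg'b : ∃ C : ℝ, ∀ x₀ : Γ, ‖g' x₀‖ ≤ C)
    (φ φ' : X → ℂ)
    (hφ : IsEigOn S T Γ lam g φ) (hφ' : IsEigOn S T Γ lam g' φ') :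
    ∀ x ∈ flowImage S T Γ,
      ‖φ x - φ' x‖ ≤
        max 1 (Real.exp (lam.re * T)) * ⨆ x₀ : Γ, ‖g x₀ - g' x₀‖ := by
  rintro x ⟨s, hs, x₀, hx₀, rfl⟩
  have h1 := hφ ⟨x₀, hx₀⟩ s hs
  have h2 := hφ' ⟨x₀, hx₀⟩ s hs
  rw [h1, h2, ← mul_sub]
  rw [norm_mul, Complex.norm_exp]
  have hre : (lam * s).re = lam.re * s := by simp [Complex.mul_re]
  rw [hre]
  obtain ⟨C, hC⟩ := hgb
  obtain ⟨C', hC'⟩ := hg'b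
  have hbdd : BddAbove (Set.range fun x₀ : Γ => ‖g x₀ - g' x₀‖) := by
    refine ⟨C + C', ?_⟩
    rintro _ ⟨y, rfl⟩
    exact le_trans (norm_sub_le _ _) (add_le_add (hC y) (hC' y))
  have hle : ‖g ⟨x₀, hx₀⟩ - g' ⟨x₀, hx₀⟩‖ ≤
      ⨆ y : Γ, ‖g y - g' y‖ := le_ciSup hbdd ⟨x₀, hx₀⟩
  have hexp : Real.exp (lam.re * s) ≤ max 1 (Real.exp (lam.re * T)) := by
    rcases le_or_gt lam.re 0 with h | h
    · refine le_max_of_le_left ?_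
      rw [← Real.exp_zero]
      exact Real.exp_le_exp.mpr (mul_nonpos_of_nonpos_of_nonneg h hs.1)
    · refine le_max_of_le_right ?_
      exact Real.exp_le_exp.mpr (mul_le_mul_of_nonneg_left hs.2 h.le)
  exact mul_le_mul hexp hle (norm_nonneg _)
    (le_trans zero_le_one (le_max_left _ _))
end

section
/- Let Γ ⊆ X be non-recurrent and let Λ ⊆ ℂ contain 0 and at least one element λ* with Re(λ*) ≠ 0. Then the family of eigenfunctions generated by pairs (λ, g) with λ ∈ Λ and g : Γ → ℂ continuous separates the points of X_T: for any x₁, x₂ ∈ X_T with x₁ ≠ x₂, there exist λ ∈ Λ and a continuous g : Γ → ℂ such that the eigenfunction φ generated by (λ, g) satisfies φ(x₁) ≠ φ(x₂). -/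
/-- Uniqueness of the flow representation of a point of `X_T`. -/
lemma flow_uniq {X : Type*} (S : ℝ → X → X)
    (hS0 : ∀ x, S 0 x = x)
    (hSadd : ∀ s t : ℝ, ∀ x, S (t + s) x = S t (S s x))
    (T : ℝ) (Γ : Set X) (hΓ : nonrecurrent S T Γ)
    {s₁ s₂ : ℝ} (h₁ : s₁ ∈ Set.Icc (0:ℝ) T) (h₂ : s₂ ∈ Set.Icc (0:ℝ) T)
    {y₁ y₂ : X} (hy₁ : y₁ ∈ Γ) (hy₂ : y₂ ∈ Γ) (heq : S s₁ y₁ = S s₂ y₂) :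
    s₁ = s₂ ∧ y₁ = y₂ := by
  have key : ∀ a b : ℝ, a ∈ Set.Icc (0:ℝ) T → b ∈ Set.Icc (0:ℝ) T →
      ∀ u v : X, u ∈ Γ → v ∈ Γ → S a u = S b v → a ≤ b → a = b ∧ u = v := by
    intro a b ha hb u v hu hv hE hab
    have e1 : u = S (-a) (S a u) := by
      have := hSadd a (-a) u
      rw [neg_add_cancel, hS0] at this
      exact this
    have e2 : S (-a) (S b v) = S (b - a) v := by
      have := hSadd b (-a) v
      rw [show -a + b = b - a by ring] at this
      exact this.symm
    have hu' : u = S (b - a) v := by rw [e1, hE, e2]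
    rcases eq_or_lt_of_le hab with h | h
    · refine ⟨h, ?_⟩
      rw [hu', ← h, sub_self, hS0]
    · exfalso
      have hlt : 0 < b - a := by linarith
      have hle : b - a ≤ T := by
        have := hb.2; have := ha.1; linarith
      exact hΓ v hv (b - a) hlt hle (hu' ▸ hu)
  rcases le_total s₁ s₂ with h | h
  · exact key s₁ s₂ h₁ h₂ y₁ y₂ hy₁ hy₂ heq h
  · obtain ⟨h1, h2⟩ := key s₂ s₁ h₂ h₁ y₂ y₁ hy₂ hy₁ heq.symm h
    exact ⟨h1.symm, h2.symm⟩

/-- For any `lam` and `g`, an eigenfunction exists. -/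
lemma exists_eig {X : Type*} (S : ℝ → X → X)
    (hS0 : ∀ x, S 0 x = x)
    (hSadd : ∀ s t : ℝ, ∀ x, S (t + s) x = S t (S s x))
    (T : ℝ) (Γ : Set X) (hΓ : nonrecurrent S T Γ)
    (lam : ℂ) (g : Γ → ℂ) :
    ∃ φ : X → ℂ, IsEigOn S T Γ lam g φ := by
  classical
  refine ⟨fun x => if h : ∃ p : ℝ × Γ, p.1 ∈ Set.Icc (0:ℝ) T ∧ S p.1 p.2 = x then
      Complex.exp (lam * (h.choose.1 : ℂ)) * g h.choose.2 else 0, ?_⟩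
  intro x₀ s hs
  have h : ∃ p : ℝ × Γ, p.1 ∈ Set.Icc (0:ℝ) T ∧ S p.1 p.2 = S s (x₀ : X) :=
    ⟨(s, x₀), hs, rfl⟩
  simp only []
  rw [dif_pos h]
  obtain ⟨hmem, heq⟩ := h.choose_spec
  obtain ⟨h1, h2⟩ := flow_uniq S hS0 hSadd T Γ hΓ hmem hs
    h.choose.2.2 x₀.2 heq
  rw [h1, Subtype.ext h2]

theorem stmt13 {X : Type*} [MetricSpace X] (S : ℝ → X → X)
    (hS0 : ∀ x, S 0 x = x)
    (hSadd : ∀ s t : ℝ, ∀ x, S (t + s) x = S t (S s x))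
    (hScont : Continuous fun p : ℝ × X => S p.1 p.2)
    (T : ℝ) (hT : 0 < T) (Γ : Set X)
    (hΓ : nonrecurrent S T Γ)
    (Λ : Set ℂ) (h0 : (0 : ℂ) ∈ Λ) (hre : ∃ z ∈ Λ, z.re ≠ 0) :
    ∀ x₁ ∈ flowImage S T Γ, ∀ x₂ ∈ flowImage S T Γ, x₁ ≠ x₂ →
      ∃ lam ∈ Λ, ∃ g : Γ → ℂ, Continuous g ∧
        ∃ φ : X → ℂ, IsEigOn S T Γ lam g φ ∧ φ x₁ ≠ φ x₂ := by
  rintro x₁ ⟨s₁, hs₁, y₁, hy₁, rfl⟩ x₂ ⟨s₂, hs₂, y₂, hy₂, rfl⟩ hne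
  by_cases hs : s₁ = s₂
  · -- same time, different points: use lam = 0 and a separating continuous g
    subst hs
    have hy : y₁ ≠ y₂ := fun h => hne (by rw [h])
    refine ⟨0, h0, fun y => (dist (y : X) y₁ : ℂ), ?_, ?_⟩
    · exact Complex.continuous_ofReal.comp
        ((continuous_dist.comp (continuous_subtype_val.prodMk continuous_const)))
    · obtain ⟨φ, hφ⟩ := exists_eig S hS0 hSadd T Γ hΓ 0
        (fun y => (dist (y : X) y₁ : ℂ))
    
      refine ⟨φ, hφ, ?_⟩
      have e1 := hφ ⟨y₁, hy₁⟩ s₁ hs₁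
      have e2 := hφ ⟨y₂, hy₂⟩ s₁ hs₁
      simp only [zero_mul, Complex.exp_zero, one_mul] at e1 e2
      rw [e1, e2]
      simp only [dist_self, Complex.ofReal_zero]
      intro h
      have : dist y₂ y₁ = 0 := by exact_mod_cast h.symm
      exact hy ((dist_eq_zero.mp this).symm)
  · -- different times: use lam with nonzero real part and g = 1
    obtain ⟨lam, hlam, hlamre⟩ := hre
    refine ⟨lam, hlam, fun _ => 1, continuous_const, ?_⟩
    obtain ⟨φ, hφ⟩ := exists_eig S hS0 hSadd T Γ hΓ lam (fun _ => 1)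
    refine ⟨φ, hφ, ?_⟩
    have e1 := hφ ⟨y₁, hy₁⟩ s₁ hs₁
    have e2 := hφ ⟨y₂, hy₂⟩ s₂ hs₂
    rw [e1, e2, mul_one, mul_one]
    intro h
    have habs := congrArg (fun z : ℂ => ‖z‖) h
    rw [Complex.norm_exp, Complex.norm_exp] at habs
    have hre1 : (lam * (s₁ : ℂ)).re = lam.re * s₁ := by
      simp [Complex.mul_re]
    have hre2 : (lam * (s₂ : ℂ)).re = lam.re * s₂ := by
      simp [Complex.mul_re]
    rw [hre1, hre2] at habs
    have := Real.exp_eq_exp.mp habs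
    exact hs (mul_left_cancel₀ hlamre this)
end

section
/- Let Γ ⊆ X be compact and non-recurrent. Then the map P : [0,T] × Γ → X_T defined by P(s, x₀) = S(s, x₀) is a homeomorphism from [0,T] × Γ onto X_T. In particular X_T is compact, and there exist continuous maps τ : X_T → [0,T] and π : X_T → Γ such that S(τ(x), π(x)) = x for every x ∈ X_T, with τ(S(s, x₀)) = s and π(S(s, x₀)) = x₀ for all s ∈ [0,T] and x₀ ∈ Γ. -/
theorem stmt14 {X : Type*} [MetricSpace X] (S : ℝ → X → X)
    (hS0 : ∀ x, S 0 x = x)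
    (hSadd : ∀ s t : ℝ, ∀ x, S (t + s) x = S t (S s x))
    (hScont : Continuous fun p : ℝ × X => S p.1 p.2)
    (T : ℝ) (hT : 0 < T) (Γ : Set X)
    (hΓcomp : IsCompact Γ) (hΓ : nonrecurrent S T Γ) :
    -- `P(s, x₀) = S(s, x₀)` is a homeomorphism from `[0,T] × Γ` onto `X_T`
    (∃ H : (Set.Icc (0:ℝ) T × ↥Γ) ≃ₜ ↥(flowImage S T Γ),
      ∀ p : Set.Icc (0:ℝ) T × ↥Γ, (H p : X) = S (p.1 : ℝ) (p.2 : X)) ∧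
    -- in particular `X_T` is compact
    IsCompact (flowImage S T Γ) ∧
    -- and there are continuous `τ : X_T → [0,T]` and `π : X_T → Γ` with
    -- `S(τ(x), π(x)) = x`, `τ(S(s,x₀)) = s`, `π(S(s,x₀)) = x₀`
    ∃ (τ : X → ℝ) (π : X → X),
      ContinuousOn τ (flowImage S T Γ) ∧ ContinuousOn π (flowImage S T Γ) ∧
      (∀ x ∈ flowImage S T Γ, τ x ∈ Set.Icc (0:ℝ) T ∧ π x ∈ Γ ∧ S (τ x) (π x) = x) ∧
      (∀ s ∈ Set.Icc (0:ℝ) T, ∀ x₀ ∈ Γ, τ (S s x₀) = s ∧ π (S s x₀) = x₀) := by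
  classical
  have hcancel : ∀ (s : ℝ) (x : X), S (-s) (S s x) = x := by
    intro s x
    rw [← hSadd, neg_add_cancel, hS0]
  have hinj : ∀ s ∈ Set.Icc (0:ℝ) T, ∀ t ∈ Set.Icc (0:ℝ) T, ∀ x ∈ Γ, ∀ y ∈ Γ,
      S s x = S t y → s = t ∧ x = y := by
    have key : ∀ s ∈ Set.Icc (0:ℝ) T, ∀ t ∈ Set.Icc (0:ℝ) T, ∀ x ∈ Γ, ∀ y ∈ Γ,
        s ≤ t → S s x = S t y → s = t := by
      rintro s hs t ht x hx y hy hst heq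
      by_contra hne
      have hlt : s < t := lt_of_le_of_ne hst hne
      have hxy : S (t - s) y = x := by
        have h1 : S (-s + t) y = S (-s) (S t y) := hSadd t (-s) y
        rw [neg_add_eq_sub] at h1
        rw [h1, ← heq, hcancel]
      exact hΓ y hy (t - s) (by linarith) (by linarith [hs.1, ht.2]) (hxy ▸ hx)
    intro s hs t ht x hx y hy heq
    have hst : s = t := by
      rcases le_total s t with h | h
      · exact key s hs t ht x hx y hy h heq
      · exact (key t ht s hs y hy x hx h heq.symm).symm
    subst hst
    refine ⟨rfl, ?_⟩
    have := congrArg (S (-s)) heq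
    rwa [hcancel, hcancel] at this
  haveI : CompactSpace (Set.Icc (0:ℝ) T) := isCompact_iff_compactSpace.mp isCompact_Icc
  haveI : CompactSpace ↥Γ := isCompact_iff_compactSpace.mp hΓcomp
  have hmem : ∀ p : Set.Icc (0:ℝ) T × ↥Γ, S (p.1 : ℝ) (p.2 : X) ∈ flowImage S T Γ :=
    fun p => ⟨p.1, p.1.2, p.2, p.2.2, rfl⟩
  let f : Set.Icc (0:ℝ) T × ↥Γ → ↥(flowImage S T Γ) :=
    fun p => ⟨S (p.1 : ℝ) (p.2 : X), hmem p⟩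
  have hfbij : Function.Bijective f := by
    constructor
    · rintro ⟨⟨s, hs⟩, ⟨x, hx⟩⟩ ⟨⟨t, ht⟩, ⟨y, hy⟩⟩ h
      have h' : S s x = S t y := congrArg Subtype.val h
      obtain ⟨h1, h2⟩ := hinj s hs t ht x hx y hy h'
      simp only [Prod.mk.injEq, Subtype.mk.injEq]
      exact ⟨h1, h2⟩
    · rintro ⟨x, s, hs, x₀, hx₀, hxe⟩
      exact ⟨(⟨s, hs⟩, ⟨x₀, hx₀⟩), Subtype.ext hxe⟩
  have hfcont : Continuous f := by
    apply Continuous.subtype_mk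
    exact hScont.comp ((continuous_subtype_val.comp continuous_fst).prodMk
      (continuous_subtype_val.comp continuous_snd))
  let E : (Set.Icc (0:ℝ) T × ↥Γ) ≃ ↥(flowImage S T Γ) := Equiv.ofBijective f hfbij
  have hEcont : Continuous E := hfcont
  let H : (Set.Icc (0:ℝ) T × ↥Γ) ≃ₜ ↥(flowImage S T Γ) :=
    Continuous.homeoOfEquivCompactToT2 (f := E) hEcont
  have hHval : ∀ p : Set.Icc (0:ℝ) T × ↥Γ, (H p : X) = S (p.1 : ℝ) (p.2 : X) :=
    fun p => rfl
  have himg : flowImage S T Γ = (fun p : ℝ × X => S p.1 p.2) '' (Set.Icc 0 T ×ˢ Γ) := by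
    ext x
    constructor
    · rintro ⟨s, hs, x₀, hx₀, rfl⟩; exact ⟨(s, x₀), ⟨hs, hx₀⟩, rfl⟩
    · rintro ⟨⟨s, x₀⟩, ⟨hs, hx₀⟩, rfl⟩; exact ⟨s, hs, x₀, hx₀, rfl⟩
  have hcomp : IsCompact (flowImage S T Γ) :=
    himg ▸ (isCompact_Icc.prod hΓcomp).image hScont
  refine ⟨⟨H, hHval⟩, hcomp, ?_⟩
  let τ : X → ℝ := fun x => if h : x ∈ flowImage S T Γ then ((H.symm ⟨x, h⟩).1 : ℝ) else 0
  let π : X → X := fun x => if h : x ∈ flowImage S T Γ then ((H.symm ⟨x, h⟩).2 : X) else x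
  have hτres : (flowImage S T Γ).domRestrict τ = fun x => ((H.symm x).1 : ℝ) := by
    funext x
    simp only [Set.domRestrict_apply, τ, dif_pos x.2]
  have hπres : (flowImage S T Γ).domRestrict π = fun x => ((H.symm x).2 : X) := by
    funext x
    simp only [Set.domRestrict_apply, π, dif_pos x.2]
  refine ⟨τ, π, ?_, ?_, ?_, ?_⟩
  · rw [continuousOn_iff_continuous_restrict, hτres]
    exact continuous_subtype_val.comp (continuous_fst.comp H.continuous_symm)
  · rw [continuousOn_iff_continuous_restrict, hπres]
    exact continuous_subtype_val.comp (continuous_snd.comp H.continuous_symm)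
  · intro x hx
    have hτx : τ x = ((H.symm ⟨x, hx⟩).1 : ℝ) := dif_pos hx
    have hπx : π x = ((H.symm ⟨x, hx⟩).2 : X) := dif_pos hx
    refine ⟨hτx ▸ (H.symm ⟨x, hx⟩).1.2, hπx ▸ (H.symm ⟨x, hx⟩).2.2, ?_⟩
    rw [hτx, hπx]
    have := hHval (H.symm ⟨x, hx⟩)
    rw [H.apply_symm_apply] at this
    exact this.symm
  · intro s hs x₀ hx₀
    have hx : S s x₀ ∈ flowImage S T Γ := ⟨s, hs, x₀, hx₀, rfl⟩
    have hsymm : H.symm ⟨S s x₀, hx⟩ = (⟨s, hs⟩, ⟨x₀, hx₀⟩) := by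
      apply H.toEquiv.symm_apply_eq.mpr
      exact Subtype.ext (hHval (⟨s, hs⟩, ⟨x₀, hx₀⟩)).symm
    constructor
    · show τ (S s x₀) = s
      rw [show τ (S s x₀) = ((H.symm ⟨S s x₀, hx⟩).1 : ℝ) from dif_pos hx, hsymm]
    · show π (S s x₀) = x₀
      rw [show π (S s x₀) = ((H.symm ⟨S s x₀, hx⟩).2 : X) from dif_pos hx, hsymm]
end

section
/- Let Γ ⊆ X be compact and non-recurrent, let λ ∈ ℂ, and let g : Γ → ℂ be continuous. Then the eigenfunction φ : X_T → ℂ generated by (λ, g) is continuous on X_T. -/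
theorem stmt15 {X : Type*} [MetricSpace X] (S : ℝ → X → X)
    (hS0 : ∀ x, S 0 x = x)
    (hSadd : ∀ s t : ℝ, ∀ x, S (t + s) x = S t (S s x))
    (hScont : Continuous fun p : ℝ × X => S p.1 p.2)
    (T : ℝ) (hT : 0 < T) (Γ : Set X)
    (hΓ : nonrecurrent S T Γ)
    (hΓcomp : IsCompact Γ)
    (lam : ℂ) (g : Γ → ℂ) (hg : Continuous g)
    (φ : X → ℂ) (hφ : IsEigOn S T Γ lam g φ) :
    ContinuousOn φ (flowImage S T Γ) := by
  -- undo lemma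
  have hundo : ∀ (s : ℝ) (x : X), S (-s) (S s x) = x := by
    intro s x
    rw [← hSadd, neg_add_cancel, hS0]
  -- the parametrizing map
  set C := Set.Icc (0:ℝ) T × Γ with hC
  haveI : CompactSpace (Set.Icc (0:ℝ) T) := isCompact_iff_compactSpace.mp isCompact_Icc
  haveI : CompactSpace Γ := isCompact_iff_compactSpace.mp hΓcomp
  set F : C → X := fun c => S (c.1 : ℝ) (c.2 : X) with hF
  have hFcont : Continuous F := by
    exact hScont.comp ((continuous_subtype_val.comp continuous_fst).prodMk
      (continuous_subtype_val.comp continuous_snd))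
  have hFinj : Function.Injective F := by
    rintro ⟨⟨s, hs⟩, ⟨x, hx⟩⟩ ⟨⟨s', hs'⟩, ⟨x', hx'⟩⟩ h
    simp only [hF] at h
    -- key: if S s x = S s' x' then s = s'
    have key : ∀ (a b : ℝ) (y z : X), a ∈ Set.Icc (0:ℝ) T → b ∈ Set.Icc (0:ℝ) T →
        y ∈ Γ → z ∈ Γ → a < b → S a y = S b z → False := by
      intro a b y z ha hb hy hz hab heq
      have : y = S (b - a) z := by
        have := congrArg (S (-a)) heq
        rw [hundo] at this
        rw [this, ← hSadd]
        ring_nf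
      exact hΓ z hz (b - a) (by linarith) (by linarith [ha.1, hb.2]) (this ▸ hy)
    have hss' : s = s' := by
      rcases lt_trichotomy s s' with h1 | h1 | h1
      · exact absurd (key s s' x x' hs hs' hx hx' h1 h) (fun f => f)
      · exact h1
      · exact absurd (key s' s x' x hs' hs hx' hx h1 h.symm) (fun f => f)
    subst hss'
    have hxx' : x = x' := by
      have := congrArg (S (-s)) h
      rwa [hundo, hundo] at this
    exact Prod.ext rfl (Subtype.ext hxx')
  have hemb : Topology.IsEmbedding F := (hFcont.isClosedEmbedding hFinj).toIsEmbedding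
  -- flowImage = range F
  have hrange : flowImage S T Γ = Set.range F := by
    ext x
    constructor
    · rintro ⟨s, hs, x₀, hx₀, rfl⟩
      exact ⟨⟨⟨s, hs⟩, ⟨x₀, hx₀⟩⟩, rfl⟩
    · rintro ⟨⟨⟨s, hs⟩, ⟨x₀, hx₀⟩⟩, rfl⟩
      exact ⟨s, hs, x₀, hx₀, rfl⟩
  rw [hrange, continuousOn_iff_continuous_restrict]
  -- restrict φ = (φ ∘ F) ∘ e.symm, with e the homeomorphism onto range
  let e : C ≃ₜ Set.range F := hemb.toHomeomorph
  have hcomp : Continuous (φ ∘ F) := by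
    have : φ ∘ F = fun c : C => Complex.exp (lam * (c.1 : ℝ)) * g c.2 := by
      funext c
      exact hφ c.2 c.1 c.1.2
    rw [this]
    exact (Complex.continuous_exp.comp (continuous_const.mul
      ((Complex.continuous_ofReal.comp continuous_subtype_val).fst'))).mul (hg.snd')
  have : (Set.range F).domRestrict φ = (φ ∘ F) ∘ e.symm := by
    funext y
    simp only [Function.comp_apply, Set.domRestrict_apply]
    congr 1
    exact (congrArg Subtype.val (e.apply_symm_apply y)).symm
  rw [this]
  exact hcomp.comp e.symm.continuous
end

section
/- Let Γ ⊆ X be non-recurrent, let A be an n × n complex matrix, and let g : Γ → ℂⁿ. Then there exists a unique function ψ : X_T → ℂⁿ such that ψ(S(s, x₀)) = exp(s·A) · g(x₀) for all x₀ ∈ Γ and s ∈ [0,T], where exp denotes the matrix exponential. Moreover ψ satisfies ψ(S(t, S(s, x₀))) = exp(t·A) · ψ(S(s, x₀)) for all x₀ ∈ Γ and all s ≥ 0, t ≥ 0 with s + t ≤ T. (Taking A to be a Jordan block J_λ yields the generalized eigenfunctions of the Koopman operator.) -/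
private lemma key {X : Type*} (S : ℝ → X → X)
    (hS0 : ∀ x, S 0 x = x)
    (hSadd : ∀ s t : ℝ, ∀ x, S (t + s) x = S t (S s x))
    (T : ℝ) (Γ : Set X) (hΓ : nonrecurrent S T Γ) :
    ∀ s s' : ℝ, ∀ x₀ x₀' : X, s ∈ Set.Icc (0:ℝ) T → s' ∈ Set.Icc (0:ℝ) T →
      x₀ ∈ Γ → x₀' ∈ Γ → S s x₀ = S s' x₀' → s = s' ∧ x₀ = x₀' := by
  have hinv : ∀ (s : ℝ) (x : X), S (-s) (S s x) = x := by
    intro s x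
    rw [← hSadd s (-s) x]
    simp [hS0]
  have hle : ∀ s s' : ℝ, ∀ x₀ x₀' : X, s ∈ Set.Icc (0:ℝ) T → s' ∈ Set.Icc (0:ℝ) T →
      x₀ ∈ Γ → x₀' ∈ Γ → S s x₀ = S s' x₀' → s ≤ s' → s = s' := by
    intro s s' x₀ x₀' hs hs' hx hx' heq hss
    by_contra hne
    have hlt : s < s' := lt_of_le_of_ne hss hne
    have h1 : x₀ = S (s' - s) x₀' := by
      have := congrArg (S (-s)) heq
      rw [hinv] at this
      rw [this, ← hSadd s' (-s) x₀']
      ring_nf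
    exact hΓ x₀' hx' (s' - s) (by linarith) (by linarith [hs.1, hs'.2]) (h1 ▸ hx)
  intro s s' x₀ x₀' hs hs' hx hx' heq
  have hseq : s = s' := by
    rcases le_total s s' with h | h
    · exact hle s s' x₀ x₀' hs hs' hx hx' heq h
    · exact (hle s' s x₀' x₀ hs' hs hx' hx heq.symm h).symm
  refine ⟨hseq, ?_⟩
  subst hseq
  have := congrArg (S (-s)) heq
  rwa [hinv, hinv] at this

set_option maxHeartbeats 1000000 in
theorem stmt16 {X : Type*} [MetricSpace X] (S : ℝ → X → X)
    (hS0 : ∀ x, S 0 x = x)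
    (hSadd : ∀ s t : ℝ, ∀ x, S (t + s) x = S t (S s x))
    (hScont : Continuous fun p : ℝ × X => S p.1 p.2)
    (T : ℝ) (hT : 0 < T) (Γ : Set X)
    (hΓ : nonrecurrent S T Γ)
    {n : ℕ} (A : Matrix (Fin n) (Fin n) ℂ) (g : Γ → Fin n → ℂ) :
    -- existence of `ψ` with `ψ(S(s, x₀)) = exp(s • A) ⬝ g(x₀)` on `Γ × [0, T]`
    (∃ ψ : X → Fin n → ℂ, ∀ (x₀ : Γ) (s : ℝ), s ∈ Set.Icc (0:ℝ) T →
        ψ (S s (x₀ : X)) = (NormedSpace.exp ((s : ℂ) • A)).mulVec (g x₀)) ∧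
    -- uniqueness on `X_T`
    (∀ ψ ψ' : X → Fin n → ℂ,
      (∀ (x₀ : Γ) (s : ℝ), s ∈ Set.Icc (0:ℝ) T →
        ψ (S s (x₀ : X)) = (NormedSpace.exp ((s : ℂ) • A)).mulVec (g x₀)) →
      (∀ (x₀ : Γ) (s : ℝ), s ∈ Set.Icc (0:ℝ) T →
        ψ' (S s (x₀ : X)) = (NormedSpace.exp ((s : ℂ) • A)).mulVec (g x₀)) →
      ∀ x ∈ flowImage S T Γ, ψ x = ψ' x) ∧
    -- the Koopman relation for generalized eigenfunctions
    (∀ ψ : X → Fin n → ℂ,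
      (∀ (x₀ : Γ) (s : ℝ), s ∈ Set.Icc (0:ℝ) T →
        ψ (S s (x₀ : X)) = (NormedSpace.exp ((s : ℂ) • A)).mulVec (g x₀)) →
      ∀ (x₀ : Γ) (s t : ℝ), 0 ≤ s → 0 ≤ t → s + t ≤ T →
        ψ (S t (S s (x₀ : X))) =
          (NormedSpace.exp ((t : ℂ) • A)).mulVec (ψ (S s (x₀ : X)))) := by
  classical
  have hkey := key S hS0 hSadd T Γ hΓ
  refine ⟨?_, ?_, ?_⟩
  · -- existence
    refine ⟨fun x => if h : x ∈ flowImage S T Γ then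
        (NormedSpace.exp ((h.choose : ℂ) • A)).mulVec (g ⟨h.choose_spec.2.choose,
          h.choose_spec.2.choose_spec.1⟩) else 0, ?_⟩
    intro x₀ s hs
    have hmem : S s (x₀ : X) ∈ flowImage S T Γ := ⟨s, hs, x₀, x₀.2, rfl⟩
    simp only
    rw [dif_pos hmem]
    obtain ⟨hseq, hxeq⟩ := hkey hmem.choose s hmem.choose_spec.2.choose (x₀ : X)
      hmem.choose_spec.1 hs hmem.choose_spec.2.choose_spec.1 x₀.2
      hmem.choose_spec.2.choose_spec.2
    have haux : ∀ (s' : ℝ) (x' : X) (hx' : x' ∈ Γ), s' = s → x' = (x₀ : X) →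
        (NormedSpace.exp ((s' : ℂ) • A)).mulVec (g ⟨x', hx'⟩) =
          (NormedSpace.exp ((s : ℂ) • A)).mulVec (g x₀) := by
      rintro s' x' hx' rfl rfl
      rw [show (⟨(x₀ : X), hx'⟩ : Γ) = x₀ from Subtype.ext rfl]
    exact haux _ _ _ hseq hxeq
  · -- uniqueness
    rintro ψ ψ' h h' x ⟨s, hs, x₀, hx₀, rfl⟩
    rw [h ⟨x₀, hx₀⟩ s hs, h' ⟨x₀, hx₀⟩ s hs]
  · -- Koopman
    intro ψ h x₀ s t hs ht hst
    rw [← hSadd s t, h x₀ (t + s) ⟨by linarith, by linarith⟩,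
      h x₀ s ⟨hs, by linarith⟩]
    have hcomm : Commute ((t : ℂ) • A) ((s : ℂ) • A) :=
      (Commute.refl A).smul_left _ |>.smul_right _
    have hexp : NormedSpace.exp ((t : ℂ) • A + (s : ℂ) • A) =
        NormedSpace.exp ((t : ℂ) • A) * NormedSpace.exp ((s : ℂ) • A) :=
      Matrix.exp_add_of_commute _ _ hcomm
    rw [show ((t + s : ℝ) : ℂ) • A = (t : ℂ) • A + (s : ℂ) • A by
        push_cast; rw [add_smul],
      hexp, ← Matrix.mulVec_mulVec]
end
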